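/- Let T be the subgraph of the de Bruijn graph of span n consisting, for each vertex v ≠ m (where m is the lexicographically maximum vertex), of the arc e(v) with tail v of maximum label. Let W = v_0 e_0 v_1 e_1 ... e_{k-1} v_k be a walk in T with k ≥ n+2. Then l(e_0) ≤ l(e_{n+1}). -/
import Mathlib


/-- Lemma on walks in the maximal-label functional subgraph `T` of the de Bruijn graph of
span `n`. The subgraph `T` contains, for each vertex `v` (other than the maximal vertex),
the outgoing arc of maximal label `γ v`. If `v 0, v 1, …, v k` is a walk in `T`
(so the arc leaving `v i` has label `γ (v i)`) with `k ≥ n + 2`, then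
`γ (v 0) ≤ γ (v (n+1))`, i.e. the label of the first arc is at most the label of the
`(n+2)`-nd arc. -/
theorem label_le_label_add_succ {A : Type*} [LinearOrder A] (n k : ℕ)
    (L : Set (List A)) (γ : List A → A) (v : ℕ → List A)
    -- vertices are words of length n
    (hlen : ∀ i, (v i).length = n)
    -- the language of allowed (n+1)-words is closed under rotation
    (hrot : ∀ (a : A) (w' : List A), (a :: w') ∈ L → (w' ++ [a]) ∈ L)
    -- γ (v i) is the maximal label of an arc leaving v i
    (hmax : ∀ i ≤ k, ∀ b : A, (v i) ++ [b] ∈ L → b ≤ γ (v i))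
    -- the walk follows the arcs of T: from v i we follow the arc labeled γ (v i)
    (hstep : ∀ i < k, (v i) ++ [γ (v i)] ∈ L ∧ v (i + 1) = (v i).tail ++ [γ (v i)])
    (hk : n + 2 ≤ k) :
    γ (v 0) ≤ γ (v (n + 1)) := by
  -- n = 0 is contradictory with hlen and hstep
  rcases Nat.eq_zero_or_pos n with hn | hn
  · exfalso
    have h1 := (hstep 0 (by omega)).2
    have h2 := hlen 1
    rw [h1] at h2
    simp [hn] at h2
  -- key formula: v j = drop j (v 0) ++ labels, for j ≤ n
  have key : ∀ j, j ≤ n → v j = (v 0).drop j ++ (List.range j).map (fun i => γ (v i)) := by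
    intro j
    induction j with
    | zero => simp
    | succ j ih =>
      intro hj
      have h1 := (hstep j (by omega)).2
      rw [h1, ih (by omega)]
      have hdroplen : ((v 0).drop j).length = n - j := by simp [hlen 0]
      have hne : (v 0).drop j ≠ [] := by
        intro h; rw [h] at hdroplen; simp at hdroplen; omega
      rw [List.range_succ, List.map_append, List.tail_append_of_ne_nil hne,
        List.tail_drop, List.append_assoc]
      simp [← ih (by omega)]
  have hd : (v 0).drop n = [] := List.drop_eq_nil_of_le (by rw [hlen 0])
  have hvn := key n le_rfl
  rw [hd, List.nil_append] at hvn
  -- v n has head γ (v 0)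
  obtain ⟨m, rfl⟩ := Nat.exists_eq_succ_of_ne_zero (by omega : n ≠ 0)
  rw [List.range_succ_eq_map, List.map_cons] at hvn
  -- walk step at n
  have hmem := (hstep (m + 1) (by omega)).1
  have heq : v (m + 1) ++ [γ (v (m + 1))] = γ (v 0) :: v (m + 1 + 1) := by
    rw [(hstep (m + 1) (by omega)).2, hvn]
    simp
  rw [heq] at hmem
  exact hmax (m + 1 + 1) (by omega) _ (hrot _ _ hmem)
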